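/- Let G be the complement of a cycle of length at least 5. Then G is not a 2-cograph, but every proper induced subgraph of G is a 2-cograph. -/

import Mathlib

/-- A graph is 2-connected if it has at least 3 vertices, is connected,
and remains connected after deleting any single vertex. -/
def TwoConnected {V : Type} [Fintype V] (G : SimpleGraph V) : Prop :=
  3 ≤ Fintype.card V ∧ G.Connected ∧
    ∀ v : V, (G.induce ({v}ᶜ : Set V)).Connected

/-- A graph is a 2-cograph if it has no induced subgraph `H` such that
both `H` and its complement are 2-connected. -/
def IsTwoCograph {V : Type} [Fintype V] (G : SimpleGraph V) : Prop :=
  ∀ S : Finset V, ¬ (TwoConnected (G.induce (S : Set V)) ∧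
      TwoConnected ((G.induce (S : Set V))ᶜ))

set_option linter.unusedSectionVars false

open SimpleGraph
open scoped Fin.NatCast Fin.CommRing

section Aux

section Aux
variable {V W : Type} {G : SimpleGraph V} {G' : SimpleGraph W}

lemma induce_compl_comm (G : SimpleGraph V) (s : Set V) :
    (G.induce s)ᶜ = Gᶜ.induce s := by
  ext a b
  simp [Subtype.ext_iff]

noncomputable def induceInduceIso (G : SimpleGraph V) (s : Set V) (t : Set ↥s) :
    (G.induce s).induce t ≃g G.induce (Subtype.val '' t) where
  toEquiv := Equiv.Set.image Subtype.val t Subtype.val_injective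
  map_rel_iff' := by
    intro a b
    simp [Equiv.Set.image, Equiv.Set.imageOfInjOn]

def isoInduceCompl (e : G ≃g G') (v : V) :
    G.induce ({v}ᶜ : Set V) ≃g G'.induce ({e v}ᶜ : Set W) where
  toEquiv := e.toEquiv.subtypeEquiv fun a => by simp
  map_rel_iff' := by
    intro a b
    simpa using e.map_rel_iff

def isoOfSetEq {s t : Set V} (G : SimpleGraph V) (h : s = t) :
    G.induce s ≃g G.induce t where
  toEquiv := Equiv.setCongr h
  map_rel_iff' := by intro a b; subst h; rfl

lemma tc_of_iso [Fintype V] [Fintype W] (e : G ≃g G') (h : TwoConnected G) :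
    TwoConnected G' := by
  obtain ⟨hc, hconn, hdel⟩ := h
  refine ⟨?_, e.connected_iff.mp hconn, ?_⟩
  · rw [← Fintype.card_congr e.toEquiv]; exact hc
  · intro w
    have e' := isoInduceCompl e (e.symm w)
    rw [RelIso.apply_symm_apply] at e'
    exact e'.connected_iff.mp (hdel _)


end Aux

section Cyc


variable {n : ℕ} [NeZero n]

lemma one_val (hn : 2 ≤ n) : (1 : Fin n).val = 1 := by
  rw [Fin.val_one']
  exact Nat.mod_eq_of_lt (by omega)

lemma natCast_val (k : ℕ) (hk : k < n) : ((k : Fin n)).val = k := by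
  rw [Fin.val_natCast]
  exact Nat.mod_eq_of_lt hk

lemma cyc_adj_succ (hn : 2 ≤ n) (a : Fin n) : (cycleGraph n).Adj a (a + 1) := by
  rw [cycleGraph_adj']
  right
  rw [add_sub_cancel_left, one_val hn]

lemma cyc_adj_elim (hn : 2 ≤ n) {u a : Fin n} (h : (cycleGraph n).Adj u a) :
    a = u + 1 ∨ a = u - 1 := by
  rw [cycleGraph_adj'] at h
  rcases h with h | h
  · right
    have h1 : u - a = 1 := Fin.ext (by rw [h, one_val hn])
    linear_combination -h1
  · left
    have h1 : a - u = 1 := Fin.ext (by rw [h, one_val hn])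
    linear_combination h1

lemma compl_adj_ofs (hn : 5 ≤ n) (a : Fin n) (k : ℕ) (h2 : 2 ≤ k) (hk : k ≤ n - 2) :
    (cycleGraph n)ᶜ.Adj a (a + (k : Fin n)) := by
  have hkv : ((k : Fin n)).val = k := natCast_val k (by omega)
  refine ⟨?_, ?_⟩
  · intro h
    have : (k : Fin n) = 0 := by linear_combination -h
    rw [Fin.natCast_eq_zero] at this
    have := Nat.le_of_dvd (by omega) this
    omega
  · rw [cycleGraph_adj']
    push_neg
    constructor
    · have heq : a - (a + (k : Fin n)) = ((n - k : ℕ) : Fin n) := by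
        have hcast : ((n - k : ℕ) : Fin n) = (n : Fin n) - (k : Fin n) :=
          Nat.cast_sub (by omega)
        rw [hcast, Fin.natCast_self]
        ring
      rw [heq, natCast_val (n - k) (by omega)]
      omega
    · rw [add_sub_cancel_left, hkv]
      omega

section Conn
variable (hn : 5 ≤ n)

lemma adjH (v : Fin n) (G : SimpleGraph (Fin n)) (x y : ↥({v}ᶜ : Set (Fin n)))
    (h : G.Adj ↑x ↑y) : (G.induce ({v}ᶜ : Set (Fin n))).Adj x y := by simpa using h

lemma cast_ne_v {v u : Fin n} (k : ℕ) (hk1 : 1 ≤ k) (hk : k ≤ n - 1) (hv : v = u) :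
    u + (k : Fin n) ≠ v := by
  intro h
  rw [hv] at h
  have h1 : (k : Fin n) = 0 := by linear_combination h
  rw [Fin.natCast_eq_zero] at h1
  have := Nat.le_of_dvd (by omega) h1
  omega

include hn in
lemma cast_add_one (k : ℕ) (hk : k ≤ n - 1) :
    ((k : Fin n)) + ((n - k + 1 : ℕ) : Fin n) = 1 := by
  have h : (n - k + 1 : ℕ) = (n - k) + 1 := rfl
  rw [h, Nat.cast_add, Nat.cast_sub (by omega), Fin.natCast_self]
  push_cast
  ring

include hn in
lemma reach_succ (v u : Fin n) (hu : u ≠ v) (hw : u + 1 ≠ v) :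
    ((cycleGraph n)ᶜ.induce ({v}ᶜ : Set (Fin n))).Reachable
      ⟨u, by simp [hu]⟩ ⟨u + 1, by simp [hw]⟩ := by
  have hnz : NeZero n := ‹_›
  by_cases h3 : u + ((3:ℕ) : Fin n) = v
  · -- path u → u+2 → u+4 → u+1
    have m2 : u + ((2:ℕ) : Fin n) ≠ v := by
      rw [← h3]
      intro h
      have h1 : ((2:ℕ) : Fin n) = ((3:ℕ) : Fin n) := by linear_combination h
      have := congrArg Fin.val h1
      rw [natCast_val 2 (by omega), natCast_val 3 (by omega)] at this
      omega
    have m4 : u + ((4:ℕ) : Fin n) ≠ v := by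
      rw [← h3]
      intro h
      have h1 : ((4:ℕ) : Fin n) = ((3:ℕ) : Fin n) := by linear_combination h
      have := congrArg Fin.val h1
      rw [natCast_val 4 (by omega), natCast_val 3 (by omega)] at this
      omega
    have e1 := compl_adj_ofs hn u 2 (by omega) (by omega)
    have e2 : (cycleGraph n)ᶜ.Adj (u + ((2:ℕ):Fin n)) (u + ((4:ℕ):Fin n)) := by
      have := compl_adj_ofs hn (u + ((2:ℕ):Fin n)) 2 (by omega) (by omega)
      have heq : u + ((2:ℕ):Fin n) + ((2:ℕ):Fin n) = u + ((4:ℕ):Fin n) := by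
        push_cast
        ring
      rwa [heq] at this
    have e3 : (cycleGraph n)ᶜ.Adj (u + ((4:ℕ):Fin n)) (u + 1) := by
      have := compl_adj_ofs hn (u + ((4:ℕ):Fin n)) (n - 4 + 1) (by omega) (by omega)
      have heq : u + ((4:ℕ):Fin n) + ((n - 4 + 1 : ℕ):Fin n) = u + 1 := by
        rw [add_assoc, cast_add_one hn 4 (by omega)]
      rwa [heq] at this
    exact ((adjH v _ ⟨u, by simp [hu]⟩ ⟨_, by simpa using m2⟩ e1).reachable).trans
      (((adjH v _ _ ⟨_, by simpa using m4⟩ e2).reachable).trans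
        ((adjH v _ _ ⟨_, by simp [hw]⟩ e3).reachable))
  · -- path u → u+3 → u+1
    have e1 := compl_adj_ofs hn u 3 (by omega) (by omega)
    have e2 : (cycleGraph n)ᶜ.Adj (u + ((3:ℕ):Fin n)) (u + 1) := by
      have := compl_adj_ofs hn (u + ((3:ℕ):Fin n)) (n - 3 + 1) (by omega) (by omega)
      have heq : u + ((3:ℕ):Fin n) + ((n - 3 + 1 : ℕ):Fin n) = u + 1 := by
        rw [add_assoc, cast_add_one hn 3 (by omega)]
      rwa [heq] at this
    exact ((adjH v _ ⟨u, by simp [hu]⟩ ⟨_, by simpa using h3⟩ e1).reachable).trans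
      ((adjH v _ _ ⟨_, by simp [hw]⟩ e2).reachable)

include hn in
lemma compl_del_conn (v : Fin n) :
    ((cycleGraph n)ᶜ.induce ({v}ᶜ : Set (Fin n))).Connected := by
  rw [SimpleGraph.connected_iff]
  have hv1 : v + 1 ≠ v := by
    intro h
    have h1 : (1 : Fin n) = 0 := by linear_combination h
    have := congrArg Fin.val h1
    rw [one_val (by omega)] at this
    simp at this
  refine ⟨?_, ⟨⟨v + 1, by simp [hv1]⟩⟩⟩
  rintro ⟨x, hx⟩ ⟨y, hy⟩
  simp only [Set.mem_compl_iff, Set.mem_singleton_iff] at hx hy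
  by_cases hxy : x = y
  · subst hxy; rfl
  by_cases hadj : (cycleGraph n)ᶜ.Adj x y
  · exact (adjH v _ _ _ hadj).reachable
  have hc : (cycleGraph n).Adj x y := by
    by_contra hc
    exact hadj ⟨hxy, hc⟩
  rcases cyc_adj_elim (by omega) hc with h | h
  · subst h
    exact reach_succ hn v x hx hy
  · have hx1 : x = y + 1 := by linear_combination -h
    subst hx1
    exact (reach_succ hn v y hy hx).symm

include hn in
lemma compl_conn : (cycleGraph n)ᶜ.Connected := by
  rw [SimpleGraph.connected_iff]
  refine ⟨?_, ⟨0⟩⟩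
  intro x y
  by_cases hxy : x = y
  · subst hxy; rfl
  have hne : ∃ v : Fin n, v ≠ x ∧ v ≠ y := by
    by_cases h2 : y = x + ((2:ℕ) : Fin n)
    · refine ⟨x + ((3:ℕ) : Fin n), cast_ne_v 3 (by omega) (by omega) rfl, ?_⟩
      rw [h2]
      intro h
      have h1 : ((3:ℕ) : Fin n) = ((2:ℕ) : Fin n) := by linear_combination h
      have := congrArg Fin.val h1
      rw [natCast_val 3 (by omega), natCast_val 2 (by omega)] at this
      omega
    · exact ⟨x + ((2:ℕ) : Fin n), cast_ne_v 2 (by omega) (by omega) rfl, fun h => h2 h.symm⟩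
  obtain ⟨v, hvx, hvy⟩ := hne
  exact ((compl_del_conn hn v).preconnected ⟨x, by simp [Ne.symm hvx]⟩
    ⟨y, by simp [Ne.symm hvy]⟩).map
    (⟨Subtype.val, fun h => by simpa using h⟩ :
      ((cycleGraph n)ᶜ.induce ({v}ᶜ : Set (Fin n))) →g (cycleGraph n)ᶜ)

include hn in
lemma cyc_del_conn (v : Fin n) :
    ((cycleGraph n).induce ({v}ᶜ : Set (Fin n))).Connected := by
  have hmem : ∀ i : ℕ, i ≤ n - 2 → v + 1 + (i : Fin n) ∈ ({v}ᶜ : Set (Fin n)) := by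
    intro i hi
    simp only [Set.mem_compl_iff, Set.mem_singleton_iff]
    intro h
    have h1 : ((i + 1 : ℕ) : Fin n) = 0 := by push_cast; linear_combination h
    rw [Fin.natCast_eq_zero] at h1
    have := Nat.le_of_dvd (by omega) h1
    omega
  have h1mem : v + 1 ∈ ({v}ᶜ : Set (Fin n)) := by
    have := hmem 0 (by omega)
    simpa using this
  have main : ∀ i : ℕ, i ≤ n - 2 → ∀ (x : ↥({v}ᶜ : Set (Fin n))),
      (x : Fin n) = v + 1 + (i : Fin n) →
      ((cycleGraph n).induce ({v}ᶜ : Set (Fin n))).Reachable ⟨v + 1, h1mem⟩ x := by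
    intro i
    induction i with
    | zero =>
      intro _ x hx
      have hx' : x = ⟨v + 1, h1mem⟩ := Subtype.ext (by rw [hx]; push_cast; ring)
      rw [hx']
    | succ i ih =>
      intro hi x hx
      refine (ih (by omega) ⟨v + 1 + (i : Fin n), hmem i (by omega)⟩ rfl).trans
        (SimpleGraph.Adj.reachable ?_)
      have hadj : (cycleGraph n).Adj (v + 1 + (i : Fin n)) ↑x := by
        rw [hx]
        have heq : v + 1 + ((i + 1 : ℕ) : Fin n) = (v + 1 + (i : Fin n)) + 1 := by
          push_cast; ring
        rw [heq]
        exact cyc_adj_succ (by omega) _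
      exact adjH v _ _ _ hadj
  have repr : ∀ x : ↥({v}ᶜ : Set (Fin n)), ∃ i ≤ n - 2, (x : Fin n) = v + 1 + (i : Fin n) := by
    rintro ⟨x, hx⟩
    simp only [Set.mem_compl_iff, Set.mem_singleton_iff] at hx
    refine ⟨(x - (v + 1)).val, ?_, by rw [Fin.cast_val_eq_self]; ring⟩
    have hlt : (x - (v + 1)).val < n := Fin.is_lt _
    by_contra hgt
    have hval : (x - (v + 1)).val = n - 1 := by omega
    have hxv : x = v := by
      have h1 : x - (v + 1) = ((n - 1 : ℕ) : Fin n) := by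
        apply Fin.ext
        rw [hval, natCast_val (n - 1) (by omega)]
      have h2 : ((n - 1 : ℕ) : Fin n) + 1 = 0 := by
        have e : (n - 1) + 1 = n := by omega
        calc ((n - 1 : ℕ) : Fin n) + 1 = (((n - 1) + 1 : ℕ) : Fin n) := by push_cast; ring
          _ = ((n : ℕ) : Fin n) := by rw [e]
          _ = 0 := Fin.natCast_self n
      linear_combination h1 + h2
    exact hx hxv
  rw [SimpleGraph.connected_iff]
  refine ⟨?_, ⟨⟨v + 1, h1mem⟩⟩⟩
  intro a b
  obtain ⟨ia, hia, ha⟩ := repr a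
  obtain ⟨ib, hib, hb⟩ := repr b
  exact (main ia hia a ha).symm.trans (main ib hib b hb)

include hn in
lemma tc_cyc : TwoConnected (cycleGraph n) := by
  refine ⟨by simp; omega, ?_, fun v => cyc_del_conn hn v⟩
  obtain ⟨m, rfl⟩ : ∃ m, n = m + 1 := ⟨n - 1, by omega⟩
  exact cycleGraph_connected

include hn in
lemma tc_compl_cyc : TwoConnected (cycleGraph n)ᶜ :=
  ⟨by simp; omega, compl_conn hn, fun v => compl_del_conn hn v⟩

end Conn

-- paste of b.lean content needed later; here assume
lemma no_isolated {V : Type} (G : SimpleGraph V) (v z : V) (hvz : v ≠ z)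
    (h : ∀ u, ¬ G.Adj v u) : ¬ G.Connected := by
  intro hc
  obtain ⟨p⟩ := hc.preconnected v z
  cases p with
  | nil => exact hvz rfl
  | cons ha _ => exact h _ ha

lemma not_tc_of_max_one_nbr {V : Type} [Fintype V] (G : SimpleGraph V)
    (v : V) (hv : ∀ a b, G.Adj v a → G.Adj v b → a = b) : ¬ TwoConnected G := by
  classical
  rintro ⟨hcard, hconn, hdel⟩
  by_cases hnb : ∃ w, G.Adj v w
  · obtain ⟨w, hw⟩ := hnb
    have hz : ∃ z, z ∉ ({v, w} : Finset V) := by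
      by_contra h
      push_neg at h
      have hsub : (Finset.univ : Finset V) ⊆ {v, w} := fun x _ => h x
      have := Finset.card_le_card hsub
      have h2 : ({v, w} : Finset V).card ≤ 2 := Finset.card_insert_le _ _ |>.trans (by simp)
      rw [Finset.card_univ] at this
      omega
    obtain ⟨z, hz⟩ := hz
    simp only [Finset.mem_insert, Finset.mem_singleton, not_or] at hz
    refine no_isolated _ (⟨v, by simp [hw.ne]⟩ : ({w}ᶜ : Set V)) ⟨z, by simp [hz.2]⟩
      ?_ ?_ (hdel w)
    · intro h
      exact hz.1 (congrArg Subtype.val h).symm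
    · rintro ⟨u, hu⟩ ha
      simp only [comap_adj, Function.Embedding.coe_subtype] at ha
      simp only [Set.mem_compl_iff, Set.mem_singleton_iff] at hu
      exact hu (hv u w ha hw)
  · push_neg at hnb
    obtain ⟨z, hz⟩ := Fintype.exists_ne_of_one_lt_card (by omega) v
    exact no_isolated G v z (Ne.symm hz) hnb hconn

section Part2
variable (hn : 5 ≤ n) [NeZero n]

lemma exists_boundary (U : Set (Fin n)) (hne : U.Nonempty) (x : Fin n) (hx : x ∉ U) :
    ∃ u ∈ U, u - 1 ∉ U := by
  classical
  obtain ⟨a, ha⟩ := hne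
  have hex : ∃ k : ℕ, x + (k : Fin n) ∈ U := by
    refine ⟨(a - x).val, ?_⟩
    rw [Fin.cast_val_eq_self]
    have : x + (a - x) = a := by ring
    rwa [this]
  let k := Nat.find hex
  have hk : x + (k : Fin n) ∈ U := Nat.find_spec hex
  have hk0 : k ≠ 0 := by
    intro h
    apply hx
    have : x + ((k : ℕ) : Fin n) = x := by rw [h]; push_cast; ring
    rwa [this] at hk
  refine ⟨x + (k : Fin n), hk, ?_⟩
  have heq : x + (k : Fin n) - 1 = x + ((k - 1 : ℕ) : Fin n) := by
    have e : (k - 1) + 1 = k := by omega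
    have : ((k - 1 : ℕ) : Fin n) + 1 = (k : Fin n) := by
      calc ((k - 1 : ℕ) : Fin n) + 1 = (((k - 1) + 1 : ℕ) : Fin n) := by push_cast; ring
        _ = (k : Fin n) := by rw [e]
    linear_combination -this
  rw [heq]
  exact Nat.find_min hex (by omega)

include hn in
lemma not_tc_induce_cycle (U : Set (Fin n)) [Fintype ↥U] (x : Fin n) (hx : x ∉ U) :
    ¬ TwoConnected ((cycleGraph n).induce U) := by
  intro htc
  have hcard := htc.1
  have hne : U.Nonempty := by
    rcases Set.eq_empty_or_nonempty U with h | h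
    · exfalso
      haveI := Set.isEmpty_coe_sort.mpr h
      rw [Fintype.card_eq_zero] at hcard
      omega
    · exact h
  obtain ⟨u, hu, hub⟩ := exists_boundary U hne x hx
  refine not_tc_of_max_one_nbr _ (⟨u, hu⟩ : ↥U) ?_ htc
  rintro ⟨a, haU⟩ ⟨b, hbU⟩ haa hbb
  simp only [comap_adj, Function.Embedding.coe_subtype] at haa hbb
  have ha' : a = u + 1 := by
    rcases cyc_adj_elim (by omega) haa with h | h
    · exact h
    · exact absurd (h ▸ haU) hub
  have hb' : b = u + 1 := by
    rcases cyc_adj_elim (by omega) hbb with h | h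
    · exact h
    · exact absurd (h ▸ hbU) hub
  exact Subtype.ext (ha'.trans hb'.symm)

end Part2
end Cyc

theorem complement_cycle_minimal (n : ℕ) (hn : 5 ≤ n) :
    ¬ IsTwoCograph (SimpleGraph.cycleGraph n)ᶜ ∧
      ∀ S : Finset (Fin n), S ≠ Finset.univ →
        IsTwoCograph ((SimpleGraph.cycleGraph n)ᶜ.induce (S : Set (Fin n))) := by
  haveI : NeZero n := ⟨by omega⟩
  constructor
  · intro h
    refine h Finset.univ ⟨?_, ?_⟩
    · exact tc_of_iso (((induceUnivIso ((cycleGraph n)ᶜ)).symm).trans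
        (isoOfSetEq _ (Finset.coe_univ (α := Fin n)).symm)) (tc_compl_cyc hn)
    · rw [induce_compl_comm, compl_compl]
      exact tc_of_iso (((induceUnivIso (cycleGraph n)).symm).trans
        (isoOfSetEq _ (Finset.coe_univ (α := Fin n)).symm)) (tc_cyc hn)
  · rintro S hS T ⟨h1, h2⟩
    rw [induce_compl_comm, induce_compl_comm, compl_compl] at h2
    obtain ⟨x, hxS⟩ : ∃ x, x ∉ S := by
      by_contra h
      push_neg at h
      exact hS (Finset.eq_univ_iff_forall.mpr h)
    set U : Set (Fin n) := Subtype.val '' ((T : Set ↥(S : Set (Fin n)))) with hU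
    haveI : Fintype ↥U := Set.Finite.fintype (Set.toFinite U)
    have h3 : TwoConnected ((SimpleGraph.cycleGraph n).induce U) :=
      tc_of_iso (induceInduceIso _ _ _) h2
    have hxU : x ∉ U := by
      rintro ⟨b, hbT, rfl⟩
      exact hxS (by exact_mod_cast b.2)
    exact not_tc_induce_cycle hn U x hxU h3
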